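/- Let φ(z) = (az+b)/(cz+d) (a,b,c,d ∈ ℂ, ad−bc ≠ 0) be a linear fractional self-map of 𝔻 having a fixed point on the unit circle ∂𝔻, let σ(z) = (conj(a)·z − conj(c))/(−conj(b)·z + conj(d)), let β ∈ ℂ \ {0}, let ψ(z) = β·K_{σ(0)}(z), and let μ ∈ ℂ with |μ| = 1. If the weighted composition operator W_{ψ,φ} on H² is normal, then W_{ψ,φ} is J_μ-normal if and only if (conj(c)·d − conj(a)·b)·conj(μ) = conj(a)·c − conj(b)·d. -/

import Mathlib

open scoped ComplexConjugate InnerProductSpace ENNReal NNReal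
open Complex Metric

noncomputable section

abbrev H2 : Type := lp (fun _ : ℕ => ℂ) 2

namespace H2

/-- Evaluation of an element of `H²` (given by its sequence of Taylor coefficients)
at a point `z` of the unit disk: `f(z) = ∑ aₙ zⁿ`. -/
def eval (f : H2) (z : ℂ) : ℂ := ∑' n : ℕ, (f : ∀ _ : ℕ, ℂ) n * z ^ n

/-- The Szegő kernel function `K_w(z) = 1/(1 - conj w * z)`. -/
def ker (w z : ℂ) : ℂ := (1 - conj w * z)⁻¹

lemma kernel_memℓp (w : ℂ) (hw : ‖w‖ < 1) :
    Memℓp (fun n : ℕ => (conj w) ^ n) 2 := by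
  apply memℓp_gen
  have hsum : Summable (fun n : ℕ => (‖w‖ ^ 2) ^ n) :=
    summable_geometric_of_lt_one (by positivity) (by nlinarith [norm_nonneg w])
  refine hsum.congr fun n => ?_
  have h2 : ((2 : ℝ≥0∞).toReal) = ((2 : ℕ) : ℝ) := by simp
  rw [h2, Real.rpow_natCast]
  simp [norm_pow, ← pow_mul, Nat.mul_comm]

/-- The reproducing kernel of `H²` at `w` in the unit disk, as an element of `H²`. -/
def kernel (w : ℂ) : H2 :=
  if hw : ‖w‖ < 1 then ⟨fun n : ℕ => (conj w) ^ n, kernel_memℓp w hw⟩ else 0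

/-- `T` is the composition operator `C_φ` on `H²`. -/
def IsCompOp (φ : ℂ → ℂ) (T : H2 →L[ℂ] H2) : Prop :=
  ∀ f : H2, ∀ z : ℂ, ‖z‖ < 1 → eval (T f) z = eval f (φ z)

/-- `W` is the weighted composition operator `W_{ψ,φ}` on `H²`. -/
def IsWCompOp (ψ φ : ℂ → ℂ) (W : H2 →L[ℂ] H2) : Prop :=
  ∀ f : H2, ∀ z : ℂ, ‖z‖ < 1 → eval (W f) z = ψ z * eval f (φ z)

/-- A conjugation on `H²`: a conjugate-linear involution satisfying `⟪Cx, Cy⟫ = ⟪y, x⟫`. -/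
structure IsConjugation (C : H2 → H2) : Prop where
  map_add : ∀ x y : H2, C (x + y) = C x + C y
  map_smul : ∀ (c : ℂ) (x : H2), C (c • x) = conj c • C x
  invol : ∀ x : H2, C (C x) = x
  inner_conj : ∀ x y : H2, ⟪C x, C y⟫_ℂ = ⟪y, x⟫_ℂ

/-- `T` is `C`-normal: `C T* T C = T T*`. -/
def CNormal (C : H2 → H2) (T : H2 →L[ℂ] H2) : Prop :=
  ∀ x : H2, C ((ContinuousLinearMap.adjoint T) (T (C x)))
      = T ((ContinuousLinearMap.adjoint T) x)

/-- `T` is a normal operator: `T* T = T T*`. -/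
def IsNormalOp (T : H2 →L[ℂ] H2) : Prop :=
  (ContinuousLinearMap.adjoint T).comp T = T.comp (ContinuousLinearMap.adjoint T)

/-- `T` is a unitary operator. -/
def IsUnitaryOp (T : H2 →L[ℂ] H2) : Prop :=
  T.comp (ContinuousLinearMap.adjoint T) = ContinuousLinearMap.id ℂ H2 ∧
  (ContinuousLinearMap.adjoint T).comp T = ContinuousLinearMap.id ℂ H2

/-- `C` is the conjugation `J_μ` on `H²`: `(J_μ f)(z) = conj (f (μ * conj z))`. -/
def IsJmu (μ : ℂ) (C : H2 → H2) : Prop :=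
  ∀ f : H2, ∀ z : ℂ, ‖z‖ < 1 → eval (C f) z = conj (eval f (μ * conj z))

/-- `ξ_p(z) = √(1-|p|²) / (1 - conj p * z)`. -/
def xi (p z : ℂ) : ℂ := (Real.sqrt (1 - ‖p‖ ^ 2) : ℂ) / (1 - conj p * z)

/-- `τ_p(z) = λ (p - z) / (1 - conj p * z)`. -/
def tau (p lam z : ℂ) : ℂ := lam * (p - z) / (1 - conj p * z)

/-- `C` is the conjugation `J W_{ξ_p, τ_p}` on `H²`:
`(C f)(z) = conj (ξ_p(conj z) * f (τ_p (conj z)))`. -/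
def IsJW (p lam : ℂ) (C : H2 → H2) : Prop :=
  ∀ f : H2, ∀ z : ℂ, ‖z‖ < 1 →
    eval (C f) z = conj (xi p (conj z) * eval f (tau p lam (conj z)))

end H2

section Aux

lemma hasFPowerSeriesAt_geo (A v : ℂ) :
    HasFPowerSeriesAt (fun z => A * (1 - v * z)⁻¹)
      (FormalMultilinearSeries.ofScalars ℂ (fun n => A * v ^ n)) 0 := by
  have hv : (‖v‖ * ((‖v‖₊ + 1)⁻¹ : ℝ≥0)) ≤ 1 := by
    rw [NNReal.coe_inv]
    push_cast
    rw [mul_inv_le_iff₀ (by positivity)]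
    simp [norm_nonneg]
  refine ⟨((‖v‖₊ + 1)⁻¹ : ℝ≥0), ?_, ?_, ?_⟩
  · apply (FormalMultilinearSeries.ofScalars ℂ (fun n => A * v ^ n)).le_radius_of_bound ‖A‖
    intro n
    have h1 : ‖FormalMultilinearSeries.ofScalars ℂ (fun n => A * v ^ n) n‖ = ‖A * v ^ n‖ :=
      FormalMultilinearSeries.ofScalars_norm _ _ _
    rw [h1]
    calc ‖A * v ^ n‖ * ((‖v‖₊ + 1)⁻¹ : ℝ≥0) ^ n
        = ‖A‖ * (‖v‖ * ((‖v‖₊ + 1)⁻¹ : ℝ≥0)) ^ n := by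
          rw [norm_mul, norm_pow, mul_pow]; ring
      _ ≤ ‖A‖ * 1 ^ n := by
          gcongr
      _ = ‖A‖ := by simp
  · simp
  · intro y hy
    rw [EMetric.mem_ball, edist_zero_right] at hy
    have hy' : ‖y‖ < (((‖v‖₊ + 1)⁻¹ : ℝ≥0) : ℝ) := by
      exact_mod_cast hy
    have hvy : ‖v * y‖ < 1 := by
      rw [norm_mul]
      have h2 : (0:ℝ) < ((‖v‖₊ + 1) : ℝ≥0) := by positivity
      have h3 : ‖v‖ < ((‖v‖₊ + 1) : ℝ≥0) := by
        push_cast; simp [norm_nonneg]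
      nlinarith [norm_nonneg v, norm_nonneg y, (NNReal.coe_inv (‖v‖₊ + 1) ▸ hy' : ‖y‖ < (((‖v‖₊ + 1):ℝ≥0):ℝ)⁻¹)]
    have hgeo : HasSum (fun n : ℕ => A * (v * y) ^ n) (A * (1 - v * y)⁻¹) :=
      (hasSum_geometric_of_norm_lt_one hvy).mul_left A
    have : (fun n : ℕ => (FormalMultilinearSeries.ofScalars ℂ (fun n => A * v ^ n) n) fun _ => y)
        = fun n : ℕ => A * (v * y) ^ n := by
      funext n
      rw [FormalMultilinearSeries.ofScalars_apply_eq]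
      rw [smul_eq_mul, mul_pow]; ring
    rw [this, zero_add]
    exact hgeo


namespace H2

lemma coeff_norm_le (f : H2) (n : ℕ) : ‖(f : ∀ _ : ℕ, ℂ) n‖ ≤ ‖f‖ :=
  lp.norm_apply_le_norm (by norm_num) f n

lemma summable_eval (f : H2) {z : ℂ} (hz : ‖z‖ < 1) :
    Summable (fun n : ℕ => (f : ∀ _ : ℕ, ℂ) n * z ^ n) := by
  apply Summable.of_norm_bounded
    ((summable_geometric_of_lt_one (norm_nonneg z) hz).mul_left ‖f‖)
  intro n
  rw [norm_mul, norm_pow]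
  exact mul_le_mul_of_nonneg_right (coeff_norm_le f n) (by positivity)

lemma hasSum_eval (f : H2) {z : ℂ} (hz : ‖z‖ < 1) :
    HasSum (fun n : ℕ => (f : ∀ _ : ℕ, ℂ) n * z ^ n) (eval f z) :=
  (summable_eval f hz).hasSum

lemma hasFPowerSeriesAt_eval (f : H2) :
    HasFPowerSeriesAt (eval f)
      (FormalMultilinearSeries.ofScalars ℂ (fun n => (f : ∀ _ : ℕ, ℂ) n)) 0 := by
  refine ⟨((1/2 : ℝ≥0) : ℝ≥0∞), ?_, by norm_num, ?_⟩
  · apply (FormalMultilinearSeries.ofScalars ℂ (fun n => (f : ∀ _ : ℕ, ℂ) n)).le_radius_of_bound ‖f‖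
    intro n
    have h1 : ‖FormalMultilinearSeries.ofScalars ℂ (fun n => (f : ∀ _ : ℕ, ℂ) n) n‖
        = ‖(f : ∀ _ : ℕ, ℂ) n‖ := FormalMultilinearSeries.ofScalars_norm _ _ _
    rw [h1]
    calc ‖(f : ∀ _ : ℕ, ℂ) n‖ * ((1/2 : ℝ≥0) : ℝ) ^ n ≤ ‖f‖ * 1 ^ n := by
          gcongr
          · exact coeff_norm_le f n
          · norm_num
      _ = ‖f‖ := by simp
  · intro y hy
    rw [EMetric.mem_ball, edist_zero_right] at hy
    have hy' : ‖y‖ < 1 := by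
      have : ‖y‖ < ((1/2 : ℝ≥0) : ℝ) := by exact_mod_cast hy
      have h2 : ((1/2 : ℝ≥0) : ℝ) < 1 := by norm_num
      linarith
    have := hasSum_eval f hy'
    rw [zero_add]
    have hfun : (fun n : ℕ => (FormalMultilinearSeries.ofScalars ℂ (fun n => (f : ∀ _ : ℕ, ℂ) n) n) fun _ => y)
        = fun n : ℕ => (f : ∀ _ : ℕ, ℂ) n * y ^ n := by
      funext n
      rw [FormalMultilinearSeries.ofScalars_apply_eq, smul_eq_mul]
    rw [hfun]
    exact this

lemma eval_ext {f g : H2} (h : ∀ z : ℂ, ‖z‖ < 1 → eval f z = eval g z) : f = g := by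
  have h1 := hasFPowerSeriesAt_eval f
  have h2 := hasFPowerSeriesAt_eval g
  have heq : eval f =ᶠ[nhds 0] eval g := by
    filter_upwards [Metric.ball_mem_nhds (0:ℂ) one_pos] with z hz
    exact h z (by simpa [Metric.mem_ball, dist_zero_right] using hz)
  have h3 := h1.eq_formalMultilinearSeries_of_eventually h2 heq
  rw [FormalMultilinearSeries.ofScalars_series_eq_iff] at h3
  exact lp.ext h3

lemma coeff_eq_geo (f : H2) (A v : ℂ)
    (h : ∀ z : ℂ, ‖z‖ < 1 → eval f z = A * (1 - v * z)⁻¹) :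
    ∀ n : ℕ, (f : ∀ _ : ℕ, ℂ) n = A * v ^ n := by
  have h1 := hasFPowerSeriesAt_eval f
  have h2 := hasFPowerSeriesAt_geo A v
  have heq : eval f =ᶠ[nhds 0] (fun z => A * (1 - v * z)⁻¹) := by
    filter_upwards [Metric.ball_mem_nhds (0:ℂ) one_pos] with z hz
    exact h z (by simpa [Metric.mem_ball, dist_zero_right] using hz)
  have h3 := h1.eq_formalMultilinearSeries_of_eventually h2 heq
  rw [FormalMultilinearSeries.ofScalars_series_eq_iff] at h3
  exact fun n => congrFun h3 n

lemma kernel_apply {w : ℂ} (hw : ‖w‖ < 1) (n : ℕ) :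
    (kernel w : ∀ _ : ℕ, ℂ) n = (conj w) ^ n := by
  rw [kernel, dif_pos hw]

lemma eval_kernel {w z : ℂ} (hw : ‖w‖ < 1) (hz : ‖z‖ < 1) :
    eval (kernel w) z = (1 - conj w * z)⁻¹ := by
  have hn : ‖conj w * z‖ < 1 := by
    rw [norm_mul, RCLike.norm_conj]
    nlinarith [norm_nonneg w, norm_nonneg z]
  rw [eval, tsum_congr (fun n => by rw [kernel_apply hw, ← mul_pow] :
    ∀ n : ℕ, (kernel w : ∀ _ : ℕ, ℂ) n * z ^ n = (conj w * z) ^ n)]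
  exact tsum_geometric_of_norm_lt_one hn

lemma eval_smul (α : ℂ) (f : H2) (z : ℂ) : eval (α • f) z = α * eval f z := by
  rw [eval, eval, ← tsum_mul_left]
  apply tsum_congr
  intro n
  rw [lp.coeFn_smul, Pi.smul_apply, smul_eq_mul]
  ring

lemma inner_kernel {w : ℂ} (hw : ‖w‖ < 1) (f : H2) :
    ⟪(kernel w : H2), f⟫_ℂ = eval f w := by
  rw [lp.inner_eq_tsum, eval]
  apply tsum_congr
  intro n
  rw [RCLike.inner_apply, kernel_apply hw]
  rw [map_pow, Complex.conj_conj]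

end H2

end Aux


section Ops
open H2

lemma one_sub_ne_zero' {x : ℂ} (h : ‖x‖ < 1) : (1 : ℂ) - x ≠ 0 := by
  intro h0
  rw [sub_eq_zero] at h0
  rw [← h0] at h
  simp at h

lemma norm_mul_lt_one {x y : ℂ} (hx : ‖x‖ < 1) (hy : ‖y‖ < 1) : ‖x * y‖ < 1 := by
  rw [norm_mul]
  nlinarith [norm_nonneg x, norm_nonneg y]

lemma psi_formula (c d β : ℂ) (hd : d ≠ 0) (σ ψ : ℂ → ℂ)
    (hσ0 : σ 0 = (-(conj c)) / (conj d))
    (hψ : ∀ z : ℂ, ψ z = β * H2.ker (σ 0) z) :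
    ∀ z : ℂ, ψ z = β * d * (c * z + d)⁻¹ := by
  intro z
  rw [hψ, H2.ker, hσ0]
  have h1 : conj ((-(conj c)) / (conj d)) = (-c) / d := by
    rw [map_div₀, map_neg, Complex.conj_conj, Complex.conj_conj]
  rw [h1]
  have h2 : 1 - (-c) / d * z = (c * z + d) / d := by
    field_simp
    ring
  rw [h2, inv_div, div_eq_mul_inv]
  ring

lemma eval_W_kernel (a b c d β : ℂ) (φ : ℂ → ℂ)
    (hφ : ∀ z : ℂ, φ z = (a * z + b) / (c * z + d))
    (hden : ∀ z : ℂ, ‖z‖ < 1 → c * z + d ≠ 0)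
    (hself : ∀ z : ℂ, ‖z‖ < 1 → ‖φ z‖ < 1)
    (ψ : ℂ → ℂ) (hψ' : ∀ z : ℂ, ψ z = β * d * (c * z + d)⁻¹)
    (W : H2 →L[ℂ] H2) (hW : H2.IsWCompOp ψ φ W)
    {w z : ℂ} (hw : ‖w‖ < 1) (hz : ‖z‖ < 1) :
    H2.eval (W (H2.kernel w)) z
      = β * d * ((c - a * conj w) * z + (d - b * conj w))⁻¹ := by
  have hcd := hden z hz
  rw [hW _ z hz, H2.eval_kernel hw (hself z hz), hψ' z, hφ z]
  have h1 : 1 - conj w * ((a * z + b) / (c * z + d))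
      = ((c - a * conj w) * z + (d - b * conj w)) / (c * z + d) := by
    rw [div_eq_mul_inv, div_eq_mul_inv]
    have hinv : (c * z + d) * (c * z + d)⁻¹ = 1 := mul_inv_cancel₀ hcd
    linear_combination (-1 : ℂ) * hinv
  rw [h1, inv_div, div_eq_mul_inv]
  have : (c * z + d)⁻¹ * ((c * z + d) * ((c - a * conj w) * z + (d - b * conj w))⁻¹)
      = ((c - a * conj w) * z + (d - b * conj w))⁻¹ := by
    rw [← mul_assoc, inv_mul_cancel₀ hcd, one_mul]
  calc β * d * (c * z + d)⁻¹ * ((c * z + d) * ((c - a * conj w) * z + (d - b * conj w))⁻¹)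
      = β * d * ((c * z + d)⁻¹ * ((c * z + d) * ((c - a * conj w) * z + (d - b * conj w))⁻¹)) := by
        ring
    _ = β * d * ((c - a * conj w) * z + (d - b * conj w))⁻¹ := by rw [this]

lemma W_kernel_eq (a b c d β : ℂ) (hβ : β ≠ 0) (φ : ℂ → ℂ)
    (hφ : ∀ z : ℂ, φ z = (a * z + b) / (c * z + d))
    (hden : ∀ z : ℂ, ‖z‖ < 1 → c * z + d ≠ 0)
    (hself : ∀ z : ℂ, ‖z‖ < 1 → ‖φ z‖ < 1)
    (σ : ℂ → ℂ) (hσ : ∀ z : ℂ, σ z = (conj a * z - conj c) / (-(conj b) * z + conj d))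
    (ψ : ℂ → ℂ) (hψ' : ∀ z : ℂ, ψ z = β * d * (c * z + d)⁻¹)
    (W : H2 →L[ℂ] H2) (hW : H2.IsWCompOp ψ φ W)
    {w : ℂ} (hw : ‖w‖ < 1) :
    ‖σ w‖ < 1 ∧ (d - b * conj w ≠ 0) ∧
      W (H2.kernel w) = (β * d * (d - b * conj w)⁻¹) • H2.kernel (σ w) := by
  have hd : d ≠ 0 := by simpa using hden 0 (by simp)
  have h00 : ‖(0:ℂ)‖ < 1 := by simp
  have hφ0 : ‖conj w * φ 0‖ < 1 := by
    apply norm_mul_lt_one _ (hself 0 h00)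
    rwa [RCLike.norm_conj]
  have hq : d - b * conj w ≠ 0 := by
    intro hq0
    have he := eval_W_kernel a b c d β φ hφ hden hself ψ hψ' W hW hw h00
    rw [hW _ 0 h00, H2.eval_kernel hw (hself 0 h00), hψ' 0, hq0] at he
    simp only [mul_zero, add_zero, zero_add, inv_zero] at he
    have h2 : (1 : ℂ) - conj w * φ 0 ≠ 0 := one_sub_ne_zero' hφ0
    have h3 : β * d * d⁻¹ * (1 - conj w * φ 0)⁻¹ ≠ 0 :=
      mul_ne_zero (mul_ne_zero (mul_ne_zero hβ hd) (inv_ne_zero hd)) (inv_ne_zero h2)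
    exact h3 he
  obtain ⟨q, hqdef⟩ : ∃ q : ℂ, q = d - b * conj w := ⟨_, rfl⟩
  obtain ⟨A, hAdef⟩ : ∃ A : ℂ, A = β * d * q⁻¹ := ⟨_, rfl⟩
  obtain ⟨v, hvdef⟩ : ∃ v : ℂ, v = (a * conj w - c) / q := ⟨_, rfl⟩
  rw [← hqdef] at hq
  have hA : A ≠ 0 := by rw [hAdef]; exact mul_ne_zero (mul_ne_zero hβ hd) (inv_ne_zero hq)
  have hcoef : ∀ n : ℕ, ((W (H2.kernel w)) : ∀ _ : ℕ, ℂ) n = A * v ^ n := by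
    apply H2.coeff_eq_geo
    intro z hz
    rw [eval_W_kernel a b c d β φ hφ hden hself ψ hψ' W hW hw hz, ← hqdef]
    have h1 : 1 - v * z = ((c - a * conj w) * z + q) / q := by
      rw [hvdef]
      field_simp
      ring
    rw [h1, inv_div, div_eq_mul_inv, hAdef]
    calc β * d * ((c - a * conj w) * z + q)⁻¹
        = β * d * ((q⁻¹ * q) * ((c - a * conj w) * z + q)⁻¹) := by
          rw [inv_mul_cancel₀ hq, one_mul]
      _ = β * d * q⁻¹ * (q * ((c - a * conj w) * z + q)⁻¹) := by ring
  have hσw : conj (σ w) = v := by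
    rw [hσ w, hvdef, hqdef, map_div₀]
    simp only [map_sub, map_add, map_mul, map_neg, Complex.conj_conj]
    ring_nf
  have hmem : Summable (fun n : ℕ => ‖A * v ^ n‖ ^ (2:ℝ)) := by
    have hm := lp.memℓp (W (H2.kernel w))
    rw [memℓp_gen_iff (by norm_num : (0:ℝ) < (2:ℝ≥0∞).toReal)] at hm
    have h2 : ((2:ℝ≥0∞).toReal) = (2:ℝ) := by simp
    rw [h2] at hm
    exact hm.congr (fun n => by rw [hcoef n])
  have hv1 : ‖v‖ < 1 := by
    by_contra hge
    push_neg at hge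
    have hA2 : (0:ℝ) < ‖A‖ ^ (2:ℝ) := by
      apply Real.rpow_pos_of_pos
      simpa using hA
    have hbound : ∀ n : ℕ, ‖A‖ ^ (2:ℝ) ≤ ‖A * v ^ n‖ ^ (2:ℝ) := by
      intro n
      apply Real.rpow_le_rpow (norm_nonneg A) _ (by norm_num)
      rw [norm_mul, norm_pow]
      have h1n : 1 ≤ ‖v‖ ^ n := one_le_pow₀ hge
      nlinarith [norm_nonneg A]
    have hle : ‖A‖ ^ (2:ℝ) ≤ 0 := ge_of_tendsto hmem.tendsto_atTop_zero
      (Filter.Eventually.of_forall hbound)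
    linarith
  have hσlt : ‖σ w‖ < 1 := by
    rw [← RCLike.norm_conj (σ w), hσw]
    exact hv1
  refine ⟨hσlt, by rwa [← hqdef], ?_⟩
  rw [← hqdef]
  apply lp.ext
  funext n
  have h5 : (((β * d * q⁻¹) • H2.kernel (σ w) : H2) : ∀ _ : ℕ, ℂ) n = A * v ^ n := by
    rw [lp.coeFn_smul, Pi.smul_apply, smul_eq_mul, H2.kernel_apply hσlt, hσw, hAdef]
  rw [hcoef n]
  exact h5.symm


end Ops


lemma H2.eval_zero (z : ℂ) : H2.eval (0 : H2) z = 0 := by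
  rw [H2.eval]
  have : ∀ n : ℕ, ((0 : H2) : ∀ _ : ℕ, ℂ) n * z ^ n = 0 := by
    intro n
    rw [lp.coeFn_zero]
    simp
  rw [tsum_congr this]
  simp

lemma adjoint_kernel (ψ φ : ℂ → ℂ) (W : H2 →L[ℂ] H2) (hW : H2.IsWCompOp ψ φ W)
    (hself : ∀ z : ℂ, ‖z‖ < 1 → ‖φ z‖ < 1) {w : ℂ} (hw : ‖w‖ < 1) :
    (ContinuousLinearMap.adjoint W) (H2.kernel w) = conj (ψ w) • H2.kernel (φ w) := by
  apply ext_inner_left ℂ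
  intro f
  calc ⟪f, (ContinuousLinearMap.adjoint W) (H2.kernel w)⟫_ℂ
      = ⟪W f, H2.kernel w⟫_ℂ := ContinuousLinearMap.adjoint_inner_right W f (H2.kernel w)
    _ = conj ⟪H2.kernel w, W f⟫_ℂ := (inner_conj_symm _ _).symm
    _ = conj (H2.eval (W f) w) := by rw [H2.inner_kernel hw]
    _ = conj (ψ w) * conj (H2.eval f (φ w)) := by rw [hW f w hw, map_mul]
    _ = conj (ψ w) * ⟪f, H2.kernel (φ w)⟫_ℂ := by
        rw [← inner_conj_symm f (H2.kernel (φ w)), H2.inner_kernel (hself w hw)]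
    _ = ⟪f, conj (ψ w) • H2.kernel (φ w)⟫_ℂ := (inner_smul_right _ _ _).symm

lemma C_kernel_eq (μ : ℂ) (hμ : ‖μ‖ = 1) (C : H2 → H2) (hCμ : H2.IsJmu μ C)
    {w : ℂ} (hw : ‖w‖ < 1) : C (H2.kernel w) = H2.kernel (μ * conj w) := by
  have hμw : ‖μ * conj w‖ < 1 := by
    rw [norm_mul, RCLike.norm_conj, hμ, one_mul]; exact hw
  apply H2.eval_ext
  intro z hz
  have hμz : ‖μ * conj z‖ < 1 := by
    rw [norm_mul, RCLike.norm_conj, hμ, one_mul]; exact hz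
  rw [hCμ _ z hz, H2.eval_kernel hw hμz, H2.eval_kernel hμw hz]
  rw [map_inv₀, map_sub, map_one, map_mul, map_mul, Complex.conj_conj, Complex.conj_conj]
  rw [map_mul, Complex.conj_conj]
  ring_nf

lemma kernel_span_dense :
    (Submodule.span ℂ {x : H2 | ∃ w : ℂ, ‖w‖ < 1 ∧ x = H2.kernel w}).topologicalClosure = ⊤ := by
  rw [Submodule.topologicalClosure_eq_top_iff]
  rw [Submodule.eq_bot_iff]
  intro f hf
  rw [Submodule.mem_orthogonal] at hf
  have h0 : ∀ w : ℂ, ‖w‖ < 1 → H2.eval f w = 0 := by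
    intro w hw
    rw [← H2.inner_kernel hw f]
    exact hf _ (Submodule.subset_span ⟨w, hw, rfl⟩)
  apply H2.eval_ext
  intro z hz
  rw [h0 z hz, H2.eval_zero]

lemma frac_eq_iff {X Y₁ Y₂ : ℂ} (hX : X ≠ 0) (h1 : Y₁ ≠ 0) (h2 : Y₂ ≠ 0)
    (h : X * Y₁⁻¹ = X * Y₂⁻¹) : Y₁ = Y₂ := by
  have := mul_left_cancel₀ hX h
  exact inv_injective this

lemma conj_ne_zero {x : ℂ} (hx : x ≠ 0) : conj x ≠ 0 := by
  simpa using hx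


lemma key_frac (a b c d β : ℂ) (φ : ℂ → ℂ)
    (hφ : ∀ z : ℂ, φ z = (a * z + b) / (c * z + d))
    (hden : ∀ z : ℂ, ‖z‖ < 1 → c * z + d ≠ 0)
    (hself : ∀ z : ℂ, ‖z‖ < 1 → ‖φ z‖ < 1)
    (ψ : ℂ → ℂ) (hψ' : ∀ z : ℂ, ψ z = β * d * (c * z + d)⁻¹)
    {u v : ℂ} (hu : ‖u‖ < 1) (hv : ‖v‖ < 1) :
    ((conj c * conj u + conj d) * (c * v + d)
        - (conj a * conj u + conj b) * (a * v + b) ≠ 0)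
    ∧ conj (ψ u) * (ψ v * (1 - conj (φ u) * φ v)⁻¹)
      = (β * conj β * (d * conj d)) *
        ((conj c * conj u + conj d) * (c * v + d)
          - (conj a * conj u + conj b) * (a * v + b))⁻¹ := by
  have h1 : c * u + d ≠ 0 := hden u hu
  have h2 : c * v + d ≠ 0 := hden v hv
  have h3 : conj c * conj u + conj d ≠ 0 := by
    intro h
    apply conj_ne_zero h1
    rw [map_add, map_mul]
    exact h
  have h4 : 1 - conj (φ u) * φ v ≠ 0 := by
    apply one_sub_ne_zero'
    apply norm_mul_lt_one _ (hself v hv)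
    rw [RCLike.norm_conj]
    exact hself u hu
  have hD : (conj c * conj u + conj d) * (c * v + d)
      - (conj a * conj u + conj b) * (a * v + b)
      = (conj c * conj u + conj d) * ((c * v + d) * (1 - conj (φ u) * φ v)) := by
    rw [hφ u, hφ v]
    simp only [map_div₀, map_add, map_mul]
    field_simp
  refine ⟨by rw [hD]; exact mul_ne_zero h3 (mul_ne_zero h2 h4), ?_⟩
  rw [hψ' u, hψ' v, hD]
  simp only [map_mul, map_inv₀, map_add]
  field_simp


lemma keyN_frac (a b c d β : ℂ) (σ : ℂ → ℂ)
    (hσ : ∀ z : ℂ, σ z = (conj a * z - conj c) / (-(conj b) * z + conj d))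
    {z w : ℂ} (hqz : d - b * conj z ≠ 0) (hqw : d - b * conj w ≠ 0)
    (hsz : ‖σ z‖ < 1) (hsw : ‖σ w‖ < 1) :
    ((d - b * conj w) * (conj d - conj b * z)
        - (a * conj w - c) * (conj a * z - conj c) ≠ 0)
    ∧ conj (β * d * (d - b * conj z)⁻¹) *
        ((β * d * (d - b * conj w)⁻¹) * (1 - conj (σ w) * σ z)⁻¹)
      = (β * conj β * (d * conj d)) *
        ((d - b * conj w) * (conj d - conj b * z)
          - (a * conj w - c) * (conj a * z - conj c))⁻¹ := by
  have h5 : conj d - conj b * z ≠ 0 := by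
    intro h
    apply conj_ne_zero hqz
    rw [map_sub, map_mul, Complex.conj_conj]
    exact h
  have hσw_eq : conj (σ w) = (a * conj w - c) / (d - b * conj w) := by
    rw [hσ w, map_div₀]
    simp only [map_add, map_sub, map_mul, map_neg, Complex.conj_conj]
    ring_nf
  have hσz_eq : σ z = (conj a * z - conj c) / (conj d - conj b * z) := by
    rw [hσ z]
    ring_nf
  have h4 : 1 - conj (σ w) * σ z ≠ 0 := by
    apply one_sub_ne_zero'
    apply norm_mul_lt_one _ hsz
    rw [RCLike.norm_conj]
    exact hsw
  have hD : (d - b * conj w) * (conj d - conj b * z)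
      - (a * conj w - c) * (conj a * z - conj c)
      = (d - b * conj w) * ((conj d - conj b * z) * (1 - conj (σ w) * σ z)) := by
    rw [hσw_eq, hσz_eq]
    field_simp
  refine ⟨by rw [hD]; exact mul_ne_zero hqw (mul_ne_zero h5 h4), ?_⟩
  rw [hD]
  simp only [map_mul, map_inv₀, map_sub, Complex.conj_conj]
  field_simp

set_option maxHeartbeats 2000000 in
/-- Let `φ` be a linear fractional self-map of `𝔻` with a fixed point on `∂𝔻`, and
`ψ = β K_{σ(0)}`. If `W_{ψ,φ}` is normal, then `W_{ψ,φ}` is `J_μ`-normal iff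
`(conj c * d - conj a * b) conj μ = conj a * c - conj b * d`. -/
theorem stmt12 (a b c d β μ : ℂ) (hβ : β ≠ 0) (hμ : ‖μ‖ = 1)
    (φ : ℂ → ℂ) (hφ : ∀ z : ℂ, φ z = (a * z + b) / (c * z + d))
    (hdet : a * d - b * c ≠ 0)
    (hden : ∀ z : ℂ, ‖z‖ < 1 → c * z + d ≠ 0)
    (hself : ∀ z : ℂ, ‖z‖ < 1 → ‖φ z‖ < 1)
    (hfix : ∃ ζ : ℂ, ‖ζ‖ = 1 ∧ (a * ζ + b) / (c * ζ + d) = ζ)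
    (σ : ℂ → ℂ) (hσ : ∀ z : ℂ, σ z = (conj a * z - conj c) / (-(conj b) * z + conj d))
    (ψ : ℂ → ℂ) (hψ : ∀ z : ℂ, ψ z = β * H2.ker (σ 0) z)
    (W : H2 →L[ℂ] H2) (hW : H2.IsWCompOp ψ φ W)
    (hnormal : H2.IsNormalOp W)
    (C : H2 → H2) (hC : H2.IsConjugation C) (hCμ : H2.IsJmu μ C) :
    H2.CNormal C W ↔ (conj c * d - conj a * b) * conj μ = conj a * c - conj b * d := by
  classical
  have hd : d ≠ 0 := by simpa using hden 0 (by simp)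
  have hσ0 : σ 0 = (-(conj c)) / (conj d) := by rw [hσ]; simp
  have hψ' : ∀ z : ℂ, ψ z = β * d * (c * z + d)⁻¹ := psi_formula c d β hd σ ψ hσ0 hψ
  have hμ1 : μ * conj μ = 1 := by
    have h1 : Complex.normSq μ = 1 := by
      rw [Complex.normSq_eq_norm_sq, hμ]; norm_num
    rw [Complex.mul_conj, h1]; norm_num
  have hX : β * conj β * (d * conj d) ≠ 0 :=
    mul_ne_zero (mul_ne_zero hβ (conj_ne_zero hβ)) (mul_ne_zero hd (conj_ne_zero hd))
  have h00 : ‖(0:ℂ)‖ < 1 := by simp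
  have hhalf : ‖(1/2 : ℂ)‖ < 1 := by norm_num
  have hW1 : ∀ {w : ℂ}, ‖w‖ < 1 → ‖σ w‖ < 1 ∧ (d - b * conj w ≠ 0) ∧
      W (H2.kernel w) = (β * d * (d - b * conj w)⁻¹) • H2.kernel (σ w) :=
    fun {w} hw => W_kernel_eq a b c d β hβ φ hφ hden hself σ hσ ψ hψ' W hW hw
  have hswap : ∀ x : H2, (ContinuousLinearMap.adjoint W) (W x)
      = W ((ContinuousLinearMap.adjoint W) x) := by
    intro x
    have h := congrArg (fun T : H2 →L[ℂ] H2 => T x) hnormal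
    simpa using h
  -- the normality functional identity
  have hNN : ∀ z w : ℂ, ‖z‖ < 1 → ‖w‖ < 1 →
      (d - b * conj w) * (conj d - conj b * z) - (a * conj w - c) * (conj a * z - conj c)
      = (conj c * conj w + conj d) * (c * z + d)
        - (conj a * conj w + conj b) * (a * z + b) := by
    intro z w hz hw
    obtain ⟨hszlt, hqz, hWz⟩ := hW1 hz
    obtain ⟨hswlt, hqw, hWw⟩ := hW1 hw
    obtain ⟨hN1ne, hN1⟩ := keyN_frac a b c d β σ hσ hqz hqw hszlt hswlt
    obtain ⟨hN2ne, hN2⟩ := key_frac a b c d β φ hφ hden hself ψ hψ' hw hz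
    have hinner : ⟪W (H2.kernel z), W (H2.kernel w)⟫_ℂ
        = H2.eval (W ((ContinuousLinearMap.adjoint W) (H2.kernel w))) z := by
      rw [← ContinuousLinearMap.adjoint_inner_right W (H2.kernel z) (W (H2.kernel w))]
      rw [hswap (H2.kernel w)]
      exact H2.inner_kernel hz _
    have hL : ⟪W (H2.kernel z), W (H2.kernel w)⟫_ℂ
        = conj (β * d * (d - b * conj z)⁻¹) *
          ((β * d * (d - b * conj w)⁻¹) * (1 - conj (σ w) * σ z)⁻¹) := by
      rw [hWz, hWw, inner_smul_left, inner_smul_right,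
        H2.inner_kernel hszlt, H2.eval_kernel hswlt hszlt]
    have hR : H2.eval (W ((ContinuousLinearMap.adjoint W) (H2.kernel w))) z
        = conj (ψ w) * (ψ z * (1 - conj (φ w) * φ z)⁻¹) := by
      rw [adjoint_kernel ψ φ W hW hself hw, map_smul, H2.eval_smul, hW _ z hz,
        H2.eval_kernel (hself w hw) (hself z hz)]
    have heq := hinner
    rw [hL, hR, hN1, hN2] at heq
    exact frac_eq_iff hX hN1ne hN2ne heq
  have hBC : b * conj b = c * conj c := by
    have h := hNN 0 0 h00 h00
    simp only [map_zero, mul_zero, zero_mul, sub_zero, zero_sub, add_zero, zero_add] at h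
    linear_combination h
  have hId : conj a * c - conj b * d = c * conj d - a * conj b := by
    have h := hNN (1/2) 0 hhalf h00
    simp only [map_zero, mul_zero, zero_mul, sub_zero, zero_sub, add_zero, zero_add] at h
    linear_combination 2 * h - 2 * hBC
  -- evaluation of both sides of the C-normality identity on kernels
  have hT2 : ∀ w z : ℂ, ‖w‖ < 1 → ‖z‖ < 1 →
      H2.eval (W ((ContinuousLinearMap.adjoint W) (H2.kernel w))) z
      = (β * conj β * (d * conj d)) *
        ((conj c * conj w + conj d) * (c * z + d)
          - (conj a * conj w + conj b) * (a * z + b))⁻¹ := by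
    intro w z hw hz
    obtain ⟨hN2ne, hN2⟩ := key_frac a b c d β φ hφ hden hself ψ hψ' hw hz
    rw [adjoint_kernel ψ φ W hW hself hw, map_smul, H2.eval_smul, hW _ z hz,
      H2.eval_kernel (hself w hw) (hself z hz), ← hN2]
  have hE2ne : ∀ w z : ℂ, ‖w‖ < 1 → ‖z‖ < 1 → (conj c * conj w + conj d) * (c * z + d)
          - (conj a * conj w + conj b) * (a * z + b) ≠ 0 := fun w z hw hz =>
    (key_frac a b c d β φ hφ hden hself ψ hψ' hw hz).1
  have hnorm_mu : ∀ {x : ℂ}, ‖x‖ < 1 → ‖μ * conj x‖ < 1 := by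
    intro x hx; rw [norm_mul, RCLike.norm_conj, hμ, one_mul]; exact hx
  have hT1 : ∀ w z : ℂ, ‖w‖ < 1 → ‖z‖ < 1 →
      H2.eval (C ((ContinuousLinearMap.adjoint W) (W (C (H2.kernel w))))) z
      = (β * conj β * (d * conj d)) *
        ((c * (μ * conj w) + d) * (conj c * (conj μ * z) + conj d)
          - (a * (μ * conj w) + b) * (conj a * (conj μ * z) + conj b))⁻¹ := by
    intro w z hw hz
    have hu : ‖μ * conj w‖ < 1 := hnorm_mu hw
    have hv : ‖μ * conj z‖ < 1 := hnorm_mu hz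
    rw [C_kernel_eq μ hμ C hCμ hw, hswap, hCμ _ z hz, hT2 _ _ hu hv]
    rw [map_mul, map_inv₀]
    have e1 : conj (β * conj β * (d * conj d)) = β * conj β * (d * conj d) := by
      simp only [map_mul, Complex.conj_conj]
      ring
    have e2 : conj ((conj c * conj (μ * conj w) + conj d) * (c * (μ * conj z) + d)
        - (conj a * conj (μ * conj w) + conj b) * (a * (μ * conj z) + b))
        = (c * (μ * conj w) + d) * (conj c * (conj μ * z) + conj d)
          - (a * (μ * conj w) + b) * (conj a * (conj μ * z) + conj b) := by
      simp only [map_add, map_sub, map_mul, Complex.conj_conj]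
    rw [e1, e2]
  have hE1ne : ∀ w z : ℂ, ‖w‖ < 1 → ‖z‖ < 1 →
      (c * (μ * conj w) + d) * (conj c * (conj μ * z) + conj d)
        - (a * (μ * conj w) + b) * (conj a * (conj μ * z) + conj b) ≠ 0 := by
    intro w z hw hz
    have h := hE2ne _ _ (hnorm_mu hw) (hnorm_mu hz)
    have hcd : (c * (μ * conj w) + d) * (conj c * (conj μ * z) + conj d)
        - (a * (μ * conj w) + b) * (conj a * (conj μ * z) + conj b)
        = conj ((conj c * conj (μ * conj w) + conj d) * (c * (μ * conj z) + d)
          - (conj a * conj (μ * conj w) + conj b) * (a * (μ * conj z) + b)) := by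
      simp only [map_add, map_sub, map_mul, Complex.conj_conj]
    rw [hcd]
    exact conj_ne_zero h
  constructor
  · intro hCN
    have h := hCN (H2.kernel 0)
    have h2 := congrArg (fun f : H2 => H2.eval f (1/2)) h
    rw [hT1 0 (1/2) h00 hhalf, hT2 0 (1/2) h00 hhalf] at h2
    have h3 := frac_eq_iff hX (hE1ne 0 (1/2) h00 hhalf) (hE2ne 0 (1/2) h00 hhalf) h2
    simp only [map_zero, mul_zero, zero_mul, add_zero, zero_add, sub_zero] at h3
    linear_combination 2 * h3 - hId
  · intro halg
    have hlam : (conj c * d - conj a * b) * conj μ = c * conj d - a * conj b :=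
      halg.trans hId
    have hlamc : (c * conj d - a * conj b) * μ = conj c * d - conj a * b := by
      linear_combination (conj c * d - conj a * b) * hμ1 - μ * hlam
    have hker : ∀ w : ℂ, ‖w‖ < 1 →
        C ((ContinuousLinearMap.adjoint W) (W (C (H2.kernel w))))
          = W ((ContinuousLinearMap.adjoint W) (H2.kernel w)) := by
      intro w hw
      apply H2.eval_ext
      intro z hz
      rw [hT1 w z hw hz, hT2 w z hw hz]
      congr 2
      linear_combination (conj w * z * (c * conj c - a * conj a)) * hμ1
        + conj w * hlamc + z * hlam
    intro x
    have hC0 : C 0 = 0 := by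
      have h := hC.map_smul 0 0
      simpa using h
    have hCiso : Isometry C := by
      apply Isometry.of_dist_eq
      intro x y
      have hsub : C x - C y = C (x - y) := by
        rw [sub_eq_add_neg, sub_eq_add_neg, hC.map_add]
        congr 1
        have h : C (-y) = -C y := by simpa using hC.map_smul (-1) y
        exact h.symm
      have hni : ∀ u : H2, ‖C u‖ = ‖u‖ := by
        intro u
        have h1 : ⟪C u, C u⟫_ℂ = ⟪u, u⟫_ℂ := hC.inner_conj u u
        have h3 : (‖C u‖ : ℝ)^2 = (‖u‖ : ℝ)^2 := by
          rw [← inner_self_eq_norm_sq (𝕜 := ℂ), ← inner_self_eq_norm_sq (𝕜 := ℂ), h1]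
        nlinarith [norm_nonneg (C u), norm_nonneg u]
      rw [dist_eq_norm, dist_eq_norm, hsub, hni]
    have hcont1 : Continuous (fun y : H2 =>
        C ((ContinuousLinearMap.adjoint W) (W (C y)))) :=
      hCiso.continuous.comp ((ContinuousLinearMap.adjoint W).continuous.comp
        (W.continuous.comp hCiso.continuous))
    have hcont2 : Continuous (fun y : H2 => W ((ContinuousLinearMap.adjoint W) y)) :=
      W.continuous.comp (ContinuousLinearMap.adjoint W).continuous
    have hsetS : ∀ y ∈ Submodule.span ℂ {x : H2 | ∃ w : ℂ, ‖w‖ < 1 ∧ x = H2.kernel w},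
        C ((ContinuousLinearMap.adjoint W) (W (C y)))
          = W ((ContinuousLinearMap.adjoint W) y) := by
      intro y hy
      induction hy using Submodule.span_induction with
      | mem y hy =>
        obtain ⟨w, hw, rfl⟩ := hy
        exact hker w hw
      | zero =>
        rw [hC0]
        simp only [map_zero]
        exact hC0
      | add u v hu hv ihu ihv =>
        rw [hC.map_add, map_add, map_add, hC.map_add, ihu, ihv, map_add, map_add]
      | smul r u hu ihu =>
        rw [hC.map_smul, map_smul, map_smul, hC.map_smul, Complex.conj_conj, ihu,
          map_smul, map_smul]
    have hdense : Dense ((Submodule.span ℂ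
        {x : H2 | ∃ w : ℂ, ‖w‖ < 1 ∧ x = H2.kernel w} : Submodule ℂ H2) : Set H2) := by
      rw [Submodule.dense_iff_topologicalClosure_eq_top]
      exact kernel_span_dense
    have hsub : closure ((Submodule.span ℂ
        {x : H2 | ∃ w : ℂ, ‖w‖ < 1 ∧ x = H2.kernel w} : Submodule ℂ H2) : Set H2)
        ⊆ {y : H2 | C ((ContinuousLinearMap.adjoint W) (W (C y)))
            = W ((ContinuousLinearMap.adjoint W) y)} :=
      (isClosed_eq hcont1 hcont2).closure_subset_iff.mpr (fun y hy => hsetS y hy)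
    exact hsub (hdense x)
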